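/- Let E be a finite effect algebra with (pairwise distinct) atoms a_1,…,a_m and let A = (y_{it}) ∈ M(E) be an n×m matrix whose rows enumerate Seq(E). If E has a state h, then the nonnegative real numbers s_t = h(a_t) (1 ≤ t ≤ m) satisfy A·(s_1,…,s_m)ᵀ = (1,…,1)ᵀ, i.e. Σ_{t=1}^m y_{it} h(a_t) = 1 for every 1 ≤ i ≤ n; consequently rank A = rank (A|1). -/

import Mathlib

/-- An effect algebra: a set with 0, 1 and a partially defined binary
operation `⊕`, modeled as an `Option`-valued operation. -/
structure EffectAlgebra (E : Type*) where
  oplus : E → E → Option E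
  zero : E
  one : E
  comm : ∀ p q, oplus p q = oplus q p
  assoc : ∀ p q r s qr, oplus q r = some qr → oplus p qr = some s →
    ∃ pq, oplus p q = some pq ∧ oplus pq r = some s
  orthosupp : ∀ p, ∃! q, oplus p q = some one
  zero_unit : ∀ p q, oplus one p = some q → p = zero

namespace EffectAlgebra

variable {E : Type*}

/-- `p ≤ q` iff there is `r` with `p ⊕ r` defined and equal to `q`. -/
def le (W : EffectAlgebra E) (p q : E) : Prop := ∃ r, W.oplus p r = some q

/-- An atom is a minimal element of `E \ {0}`. -/
def IsAtomElem (W : EffectAlgebra E) (x : E) : Prop :=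
  x ≠ W.zero ∧ ∀ y : E, W.le y x → y ≠ W.zero → y = x

/-- Partial orthosum of a list of elements. -/
def listSum (W : EffectAlgebra E) : List E → Option E
  | [] => some W.zero
  | x :: xs => (listSum W xs).bind (fun y => W.oplus x y)

/-- The orthosum `k 0 • a 0 ⊕ ⋯ ⊕ k (m-1) • a (m-1)`, when defined. -/
def mulSum (W : EffectAlgebra E) {m : ℕ} (a : Fin m → E) (k : Fin m → ℕ) : Option E :=
  W.listSum ((List.ofFn (fun t => List.replicate (k t) (a t))).flatten)

/-- `Seq(E)`: tuples `k` with `⨁ k t • a t` defined and equal to `1`. -/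
def SeqSet (W : EffectAlgebra E) {m : ℕ} (a : Fin m → E) : Set (Fin m → ℕ) :=
  {k | W.mulSum a k = some W.one}

/-- `a : Fin m → E` enumerates the atoms of `E` without repetition. -/
def AtomFamily (W : EffectAlgebra E) {m : ℕ} (a : Fin m → E) : Prop :=
  Function.Injective a ∧ (∀ t, W.IsAtomElem (a t)) ∧
    ∀ x : E, W.IsAtomElem x → ∃ t, x = a t

/-- `A ∈ M(E)`: the rows of `A` are pairwise distinct and enumerate `Seq(E)`. -/
def MemM (W : EffectAlgebra E) {m n : ℕ} (a : Fin m → E) (A : Matrix (Fin n) (Fin m) ℕ) : Prop :=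
  (∀ i j : Fin n, i ≠ j → ∃ t, A i t ≠ A j t) ∧
    {k : Fin m → ℕ | ∃ i, A i = k} = W.SeqSet a

/-- A state on an effect algebra. -/
def IsState (W : EffectAlgebra E) (s : E → ℝ) : Prop :=
  (∀ x, 0 ≤ s x ∧ s x ≤ 1) ∧ s W.one = 1 ∧
    ∀ p q r, W.oplus p q = some r → s p + s q ≤ 1 ∧ s r = s p + s q

end EffectAlgebra

/-- `(A|1)`: the matrix `A` augmented by a column of ones. -/
def augmentOnes {n m : ℕ} {R : Type*} [One R] (A : Matrix (Fin n) (Fin m) R) :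
    Matrix (Fin n) (Fin (m + 1)) R :=
  Matrix.of fun i j => if h : (j : ℕ) < m then A i ⟨j, h⟩ else 1


section Aux

open EffectAlgebra

lemma state_zero {E : Type*} (W : EffectAlgebra E) (h : E → ℝ) (hh : W.IsState h) :
    h W.zero = 0 := by
  obtain ⟨q, hq, -⟩ := W.orthosupp W.one
  have hz : q = W.zero := W.zero_unit _ _ hq
  subst hz
  have := (hh.2.2 _ _ _ hq).2
  linarith

lemma state_listSum {E : Type*} (W : EffectAlgebra E) (h : E → ℝ) (hh : W.IsState h) :
    ∀ (l : List E) (x : E), W.listSum l = some x → h x = (l.map h).sum := by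
  intro l
  induction l with
  | nil =>
    intro x hx
    simp only [EffectAlgebra.listSum, Option.some.injEq] at hx
    simp [← hx, state_zero W h hh]
  | cons e l ih =>
    intro x hx
    simp only [EffectAlgebra.listSum, Option.bind_eq_some_iff] at hx
    obtain ⟨y, hy, hxy⟩ := hx
    have := (hh.2.2 _ _ _ hxy).2
    simp [this, ih y hy]

lemma state_mulSum {E : Type*} (W : EffectAlgebra E) (h : E → ℝ) (hh : W.IsState h)
    {m : ℕ} (a : Fin m → E) (k : Fin m → ℕ) (hk : W.mulSum a k = some W.one) :
    ∑ t : Fin m, (k t : ℝ) * h (a t) = 1 := by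
  have h1 : h W.one = (((List.ofFn (fun t => List.replicate (k t) (a t))).flatten).map h).sum :=
    state_listSum W h hh _ _ hk
  rw [hh.2.1] at h1
  rw [h1]
  rw [List.map_flatten, List.map_ofFn]
  rw [List.sum_flatten]
  rw [List.map_ofFn, List.sum_ofFn]
  refine Finset.sum_congr rfl fun t _ => ?_
  simp [Function.comp, List.map_replicate, List.sum_replicate, nsmul_eq_mul]

end Aux

open Matrix

/-- If `E` has a state `h`, then `s t = h (a t)` is a nonnegative solution of
`A·s = 1`; consequently `rank A = rank (A|1)`. -/
theorem solution_of_state {E : Type*} [Fintype E] (W : EffectAlgebra E)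
    {m n : ℕ} (a : Fin m → E) (ha : W.AtomFamily a)
    (A : Matrix (Fin n) (Fin m) ℕ) (hA : W.MemM a A)
    (h : E → ℝ) (hh : W.IsState h) :
    (∀ t : Fin m, 0 ≤ h (a t)) ∧
      (∀ i : Fin n, ∑ t : Fin m, (A i t : ℝ) * h (a t) = 1) ∧
      (A.map (fun x : ℕ => (x : ℚ))).rank
        = (augmentOnes (A.map (fun x : ℕ => (x : ℚ)))).rank := by
  have hpos : ∀ t : Fin m, 0 ≤ h (a t) := fun t => (hh.1 (a t)).1
  have hsol : ∀ i : Fin n, ∑ t : Fin m, (A i t : ℝ) * h (a t) = 1 := by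
    intro i
    have hmem : A i ∈ W.SeqSet a := by
      rw [← hA.2]; exact ⟨i, rfl⟩
    exact state_mulSum W h hh a (A i) hmem
  refine ⟨hpos, hsol, ?_⟩
  set B : Matrix (Fin n) (Fin m) ℚ := A.map (fun x : ℕ => (x : ℚ)) with hB
  -- the all-ones vector is in the rational span of the columns of B
  have hones : (fun _ : Fin n => (1 : ℚ)) ∈ Submodule.span ℚ (Set.range Bᵀ) := by
    by_contra hno
    obtain ⟨f, hf1, hf2⟩ :=
      Submodule.exists_dual_map_eq_bot_of_notMem hno inferInstance
    have hker : ∀ x ∈ Submodule.span ℚ (Set.range Bᵀ), f x = 0 := by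
      intro x hx
      have : f x ∈ (⊥ : Submodule ℚ ℚ) := hf2 ▸ Submodule.mem_map_of_mem hx
      simpa using this
    set c : Fin n → ℚ := fun j => f (Pi.single j 1) with hc
    have hfv : ∀ v : Fin n → ℚ, f v = ∑ j, v j * c j := by
      intro v
      conv_lhs => rw [pi_eq_sum_univ v]
      rw [map_sum]
      refine Finset.sum_congr rfl fun j _ => ?_
      rw [LinearMap.map_smul, smul_eq_mul]
      have hsingle : (fun j_1 => if j = j_1 then (1 : ℚ) else 0) = Pi.single j 1 := by
        funext k
        simp [Pi.single_apply, eq_comm]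
      rw [hsingle]
    have hcol : ∀ t : Fin m, ∑ j, (A j t : ℚ) * c j = 0 := by
      intro t
      have : f (Bᵀ t) = 0 := hker _ (Submodule.subset_span ⟨t, rfl⟩)
      rw [hfv] at this
      simpa [hB, Matrix.transpose_apply, Matrix.map_apply] using this
    have hcsum : (∑ j, c j) ≠ 0 := by
      intro hcs
      apply hf1
      rw [hfv]
      simpa using hcs
    -- now cast to ℝ and derive a contradiction
    have hreal : (∑ j, (c j : ℝ)) = 0 := by
      have : ∑ j : Fin n, (c j : ℝ) * (∑ t : Fin m, (A j t : ℝ) * h (a t)) =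
          ∑ t : Fin m, h (a t) * (∑ j : Fin n, (A j t : ℝ) * (c j : ℝ)) := by
        simp_rw [Finset.mul_sum]
        rw [Finset.sum_comm]
        exact Finset.sum_congr rfl fun t _ => Finset.sum_congr rfl fun j _ => by ring
      have hz : ∀ t : Fin m, ∑ j : Fin n, (A j t : ℝ) * (c j : ℝ) = 0 := by
        intro t
        have := hcol t
        have := congrArg (fun q : ℚ => (q : ℝ)) this
        push_cast at this
        convert this using 2 <;> simp
      simp only [hsol, mul_one] at this
      rw [this]
      simp [hz]
    apply hcsum
    have : ((∑ j, c j : ℚ) : ℝ) = 0 := by push_cast; exact hreal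
    exact_mod_cast this
  -- column spans agree
  have hspan : Submodule.span ℚ (Set.range (augmentOnes B)ᵀ)
      = Submodule.span ℚ (Set.range Bᵀ) := by
    apply le_antisymm
    · rw [Submodule.span_le]
      rintro _ ⟨j, rfl⟩
      by_cases hj : (j : ℕ) < m
      · have : (augmentOnes B)ᵀ j = Bᵀ ⟨j, hj⟩ := by
          funext i
          simp [augmentOnes, Matrix.transpose_apply, hj]
        rw [this]
        exact Submodule.subset_span ⟨_, rfl⟩
      · have : (augmentOnes B)ᵀ j = fun _ : Fin n => (1 : ℚ) := by
          funext i
          simp [augmentOnes, Matrix.transpose_apply, hj]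
        rw [this]
        exact hones
    · rw [Submodule.span_le]
      rintro _ ⟨t, rfl⟩
      have hlt : ((Fin.castSucc t : Fin (m + 1)) : ℕ) < m := by simp [t.isLt]
      have : Bᵀ t = (augmentOnes B)ᵀ (Fin.castSucc t) := by
        funext i
        simp [augmentOnes, Matrix.transpose_apply, hlt]
      rw [this]
      exact Submodule.subset_span ⟨_, rfl⟩
  rw [Matrix.rank_eq_finrank_span_cols, Matrix.rank_eq_finrank_span_cols]
  show Module.finrank ℚ (Submodule.span ℚ (Set.range Bᵀ)) =
    Module.finrank ℚ (Submodule.span ℚ (Set.range (augmentOnes B)ᵀ))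
  rw [hspan]
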